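/- Let p0, p1, p2 ∈ R_{d1,d2} with d1, d2 > 0 be bihomogeneous polynomials with no common zeros on P^1 × P^1. Then the Koszul complex of p0, p1, p2 is not exact: there exists a triple (A0, A1, A2) ∈ R^3 with A0 p0 + A1 p1 + A2 p2 = 0 that does not lie in the Koszul submodule; in particular, p0, p1, p2 is not a regular sequence in R. -/

import Mathlib

open MvPolynomial

noncomputable section

/-- The bigraded polynomial ring `R = k[x,y,z,w]`; variables `0,1,2,3` are `x,y,z,w`. -/
abbrev Rk (k : Type*) [Field k] := MvPolynomial (Fin 4) k

/-- The bigrading: `x, y` have degree `(1,0)`; `z, w` have degree `(0,1)`. -/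
def bidegWt : Fin 4 → ℤ × ℤ := ![(1, 0), (1, 0), (0, 1), (0, 1)]

/-- `p` is bihomogeneous of bidegree `(m, n)` (with the convention that only the zero
polynomial is bihomogeneous of a bidegree with a negative coordinate). -/
def Bihom {k : Type*} [Field k] (p : Rk k) (m n : ℤ) : Prop :=
  p.IsWeightedHomogeneous bidegWt (m, n)

/-- `p0, p1, p2` have no common zeros on `ℙ¹ × ℙ¹`. -/
def NoCommonZeros {k : Type*} [Field k] (p0 p1 p2 : Rk k) : Prop :=
  ∀ a b c d : k, (a, b) ≠ (0, 0) → (c, d) ≠ (0, 0) →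
    eval ![a, b, c, d] p0 ≠ 0 ∨ eval ![a, b, c, d] p1 ≠ 0 ∨ eval ![a, b, c, d] p2 ≠ 0

/-- The map `(A0, A1, A2) ↦ A0 p0 + A1 p1 + A2 p2`, as a `k`-linear map on `R³`. -/
def syzMapk {k : Type*} [Field k] (p : Fin 3 → Rk k) : (Fin 3 → Rk k) →ₗ[k] Rk k :=
  ∑ i : Fin 3, (LinearMap.mulRight k (p i)).comp (LinearMap.proj i)

/-- The bigraded piece `Syz(p)_{m,n}`: triples `(A0, A1, A2)` of bihomogeneous polynomials of
bidegree `(m-2, n-1)` with `A0 p0 + A1 p1 + A2 p2 = 0`, as a `k`-subspace of `R³`. -/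
def SyzPiece {k : Type*} [Field k] (p : Fin 3 → Rk k) (m n : ℤ) :
    Submodule k (Fin 3 → Rk k) :=
  (Submodule.pi Set.univ fun _ => weightedHomogeneousSubmodule k bidegWt (m - 2, n - 1)) ⊓
    LinearMap.ker (syzMapk p)

/-- The syzygy module `Syz(p)`, as an `R`-submodule of `R³`. -/
def Syz {k : Type*} [Field k] (p : Fin 3 → Rk k) : Submodule (Rk k) (Fin 3 → Rk k) :=
  LinearMap.ker (∑ i : Fin 3, (LinearMap.mulRight (Rk k) (p i)).comp (LinearMap.proj i))

/-- The Koszul submodule of `R³`: the `R`-submodule generated by the three Koszul syzygies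
`(p1, −p0, 0)`, `(p2, 0, −p0)`, `(0, p2, −p1)`. -/
def KoszulSub {k : Type*} [Field k] (p0 p1 p2 : Rk k) : Submodule (Rk k) (Fin 3 → Rk k) :=
  Submodule.span (Rk k) {![p1, -p0, 0], ![p2, 0, -p0], ![0, p2, -p1]}

/-- `p0, p1, p2 ∈ R_{2,1}` are generic: only finitely many points `[a0 : a1 : a2]` of `ℙ²(k)`
are such that `a0 p0 + a1 p1 + a2 p2` factors as `q · l` with `q ∈ R_{2,0}`, `l ∈ R_{0,1}`. -/
def BidegGeneric {k : Type*} [Field k] (p0 p1 p2 : Rk k) : Prop :=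
  {P : Projectivization k (Fin 3 → k) |
    ∃ q l : Rk k, Bihom q 2 0 ∧ Bihom l 0 1 ∧
      P.rep 0 • p0 + P.rep 1 • p1 + P.rep 2 • p2 = q * l}.Finite

namespace Stmt1Aux

variable {k : Type*} [Field k]

/-- The bigraded piece as a submodule. -/
abbrev WHk (k : Type*) [Field k] (u : ℤ × ℤ) : Submodule k (Rk k) :=
  weightedHomogeneousSubmodule k bidegWt u

lemma weight_bidegWt (e : Fin 4 →₀ ℕ) :
    Finsupp.weight bidegWt e = ((e 0 + e 1 : ℤ), (e 2 + e 3 : ℤ)) := by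
  rw [Finsupp.weight_apply, Finsupp.sum_fintype _ _ (by intro i; simp)]
  rw [Fin.sum_univ_four]
  simp [bidegWt, Prod.ext_iff]

/-- Exponent vector. -/
def mexp (a b c d : ℕ) : Fin 4 →₀ ℕ := Finsupp.equivFunOnFinite.symm ![a, b, c, d]

@[simp] lemma mexp_apply (a b c d : ℕ) (i : Fin 4) : mexp a b c d i = ![a, b, c, d] i := rfl

lemma weight_mexp (a b c d : ℕ) :
    Finsupp.weight bidegWt (mexp a b c d) = ((a + b : ℤ), (c + d : ℤ)) := by
  rw [weight_bidegWt]; simp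

lemma monomial_mexp_mem (a b c d : ℕ) (r : k) {u : ℤ × ℤ}
    (h1 : (a : ℤ) + b = u.1) (h2 : (c : ℤ) + d = u.2) :
    monomial (mexp a b c d) r ∈ WHk k u := by
  refine isWeightedHomogeneous_monomial _ _ _ ?_
  rw [weight_mexp]; exact Prod.ext h1 h2

/-- Spanning family for the bigraded piece. -/
def spanFam (m n : ℕ) : Fin (m + 1) × Fin (n + 1) → Rk k :=
  fun q => monomial (mexp q.1 (m - q.1) q.2 (n - q.2)) (1 : k)

lemma WHk_le_span (m n : ℕ) :
    WHk k ((m : ℤ), (n : ℤ)) ≤ Submodule.span k (Set.range (spanFam (k := k) m n)) := by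
  intro p hp
  rw [p.as_sum]
  refine Submodule.sum_mem _ ?_
  intro e he
  have hw := hp (MvPolynomial.mem_support_iff.mp he)
  rw [weight_bidegWt] at hw
  have h01 : e 0 + e 1 = m := by
    have := congrArg Prod.fst hw; simp only [] at this; exact_mod_cast this
  have h23 : e 2 + e 3 = n := by
    have := congrArg Prod.snd hw; simp only [] at this; exact_mod_cast this
  have he0 : (e 0 : ℕ) < m + 1 := by omega
  have he2 : (e 2 : ℕ) < n + 1 := by omega
  have heq : e = mexp (e 0) (m - e 0) (e 2) (n - e 2) := by
    ext i
    fin_cases i <;> simp [mexp] <;> omega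
  have : monomial e (coeff e p) = (coeff e p) • spanFam (k := k) m n (⟨e 0, he0⟩, ⟨e 2, he2⟩) := by
    rw [spanFam, smul_monomial, smul_eq_mul, mul_one]
    exact congrArg (fun s => monomial s (coeff e p)) heq
  rw [this]
  exact Submodule.smul_mem _ _ (Submodule.subset_span (Set.mem_range_self _))

lemma WHk_eq_bot {u : ℤ × ℤ} (h : u.1 < 0 ∨ u.2 < 0) : WHk k u = ⊥ := by
  rw [eq_bot_iff]
  intro p hp
  rw [Submodule.mem_bot]
  by_contra hne
  obtain ⟨e, he⟩ := MvPolynomial.ne_zero_iff.mp hne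
  have hw := hp he
  rw [weight_bidegWt] at hw
  have h1 := congrArg Prod.fst hw
  have h2 := congrArg Prod.snd hw
  simp only at h1 h2
  rcases h with h | h <;> omega

instance WHk_finite (u : ℤ × ℤ) : FiniteDimensional k (WHk k u) := by
  by_cases h1 : 0 ≤ u.1
  · by_cases h2 : 0 ≤ u.2
    · have hu : u = ((u.1.toNat : ℤ), (u.2.toNat : ℤ)) := by
        refine Prod.ext ?_ ?_ <;> simp <;> omega
      rw [hu]
      haveI : FiniteDimensional k
          (Submodule.span k (Set.range (spanFam (k := k) u.1.toNat u.2.toNat))) :=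
        FiniteDimensional.span_of_finite k (Set.finite_range _)
      exact Submodule.finiteDimensional_of_le (WHk_le_span _ _)
    · rw [WHk_eq_bot (Or.inr (by omega))]; infer_instance
  · rw [WHk_eq_bot (Or.inl (by omega))]; infer_instance

lemma finrank_WHk_le (u : ℤ × ℤ) :
    Module.finrank k (WHk k u) ≤ (u.1 + 1).toNat * (u.2 + 1).toNat := by
  by_cases h1 : 0 ≤ u.1
  · by_cases h2 : 0 ≤ u.2
    · set m := u.1.toNat with hm
      set n := u.2.toNat with hn
      have hu : u = ((m : ℤ), (n : ℤ)) := by refine Prod.ext ?_ ?_ <;> simp [hm, hn] <;> omega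
      haveI : FiniteDimensional k
          (Submodule.span k (Set.range (spanFam (k := k) m n))) :=
        FiniteDimensional.span_of_finite k (Set.finite_range _)
      have hle : Module.finrank k (WHk k u) ≤
          Module.finrank k (Submodule.span k (Set.range (spanFam (k := k) m n))) := by
        rw [hu]; exact Submodule.finrank_mono (WHk_le_span _ _)
      refine hle.trans ((finrank_range_le_card _).trans ?_)
      have : Fintype.card (Fin (m + 1) × Fin (n + 1)) = (m + 1) * (n + 1) := by simp
      rw [this]
      have : (u.1 + 1).toNat = m + 1 := by omega
      rw [this]
      have : (u.2 + 1).toNat = n + 1 := by omega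
      rw [this]
    · rw [WHk_eq_bot (Or.inr (by omega))]; simp
  · rw [WHk_eq_bot (Or.inl (by omega))]; simp

lemma le_finrank_WHk (m n : ℕ) :
    (m + 1) * (n + 1) ≤ Module.finrank k (WHk k ((m : ℤ), (n : ℤ))) := by
  have hmem : ∀ q : Fin (m + 1) × Fin (n + 1),
      spanFam (k := k) m n q ∈ WHk k ((m : ℤ), (n : ℤ)) := by
    intro q
    refine monomial_mexp_mem _ _ _ _ _ ?_ ?_
    · show ((q.1 : ℕ) : ℤ) + ((m - q.1 : ℕ) : ℤ) = (m : ℤ)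
      have := q.1.isLt; omega
    · show ((q.2 : ℕ) : ℤ) + ((n - q.2 : ℕ) : ℤ) = (n : ℤ)
      have := q.2.isLt; omega
  have hinj : Function.Injective
      (fun q : Fin (m + 1) × Fin (n + 1) => mexp (q.1 : ℕ) (m - q.1) (q.2 : ℕ) (n - q.2)) := by
    intro q q' h
    have h0 := congrArg (fun f : Fin 4 →₀ ℕ => f 0) h
    have h2 := congrArg (fun f : Fin 4 →₀ ℕ => f 2) h
    simp only [mexp_apply] at h0 h2
    simp only [Matrix.cons_val_zero] at h0
    have h2' : (q.2 : ℕ) = (q'.2 : ℕ) := by simpa using h2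
    exact Prod.ext (Fin.ext h0) (Fin.ext h2')
  let v : Fin (m + 1) × Fin (n + 1) → WHk k ((m : ℤ), (n : ℤ)) :=
    fun q => ⟨spanFam (k := k) m n q, hmem q⟩
  have hli : LinearIndependent k v := by
    apply LinearIndependent.of_comp (WHk k ((m : ℤ), (n : ℤ))).subtype
    have hbi := (basisMonomials (Fin 4) k).linearIndependent.comp _ hinj
    have : (WHk k ((m : ℤ), (n : ℤ))).subtype ∘ v = fun q =>
        (basisMonomials (Fin 4) k) (mexp (q.1 : ℕ) (m - q.1) (q.2 : ℕ) (n - q.2)) := by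
      funext q
      simp [v, spanFam, coe_basisMonomials]
    rw [this]
    exact hbi
  have hcard := hli.fintype_card_le_finrank
  simpa using hcard

lemma wcomp_mul (δ τ : ℤ × ℤ) (q : Rk k) (hq : q.IsWeightedHomogeneous bidegWt δ)
    (c : Rk k) :
    weightedHomogeneousComponent bidegWt (τ + δ) (c * q)
      = weightedHomogeneousComponent bidegWt τ c * q := by
  induction c using MvPolynomial.induction_on' with
  | monomial e r =>
    by_cases hw : Finsupp.weight bidegWt e = τ
    · have hmono : (monomial e r : Rk k).IsWeightedHomogeneous bidegWt τ :=
        isWeightedHomogeneous_monomial _ _ _ hw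
      rw [hmono.weightedHomogeneousComponent_same, (hmono.mul hq).weightedHomogeneousComponent_same]
    · have hmono : (monomial e r : Rk k).IsWeightedHomogeneous bidegWt
          (Finsupp.weight bidegWt e) := isWeightedHomogeneous_monomial _ _ _ rfl
      rw [hmono.weightedHomogeneousComponent_ne τ (fun h => hw h.symm)]
      rw [(hmono.mul hq).weightedHomogeneousComponent_ne (τ + δ)
        (fun h => hw (by
          have := add_right_cancel h
          exact this.symm ▸ rfl))]
      rw [zero_mul]
  | add a b ha hb =>
    rw [add_mul, map_add, map_add, ha, hb, add_mul]

lemma ideal_smul_top {R : Type*} [CommRing R] (I : Ideal R) :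
    (I • (⊤ : Submodule R R)) = I := by
  conv_lhs => rw [← Ideal.span_eq I]
  rw [Submodule.span_smul_eq, Submodule.set_smul_top_eq_span, Ideal.span_eq]

lemma quot_reg_mem {R : Type*} [CommRing R] {N : Submodule R R} {x r : R}
    (hx : IsSMulRegular (R ⧸ N) x) (h : r * x ∈ N) : r ∈ N := by
  have h0 : x • (Submodule.Quotient.mk (p := N) r) = x • (0 : R ⧸ N) := by
    rw [smul_zero, ← Submodule.Quotient.mk_smul, smul_eq_mul, mul_comm]
    exact (Submodule.Quotient.mk_eq_zero N).mpr h
  exact (Submodule.Quotient.mk_eq_zero N).mp (hx h0)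




set_option maxHeartbeats 1000000 in
theorem exists_nonKoszul {k : Type*} [Field k] (d1 d2 : ℤ)
    (hd1 : 0 < d1) (hd2 : 0 < d2) (p0 p1 p2 : Rk k)
    (h0 : p0.IsWeightedHomogeneous bidegWt (d1, d2))
    (h1 : p1.IsWeightedHomogeneous bidegWt (d1, d2))
    (h2 : p2.IsWeightedHomogeneous bidegWt (d1, d2)) :
    ∃ A : Fin 3 → Rk k, A 0 * p0 + A 1 * p1 + A 2 * p2 = 0 ∧ A ∉ KoszulSub p0 p1 p2 := by
  classical
  set a : ℕ := (d1 - 1).toNat with ha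
  set b : ℕ := (d2 - 1).toNat with hb
  have hd1a : d1 = (a : ℤ) + 1 := by omega
  have hd2b : d2 = (b : ℤ) + 1 := by omega
  set σU : ℤ × ℤ := (((2 * a : ℕ) : ℤ), ((2 * b + 2 : ℕ) : ℤ)) with hσU
  set σG : ℤ × ℤ := ((a : ℤ) - 1, ((b + 1 : ℕ) : ℤ)) with hσG
  set σV : ℤ × ℤ := (((3 * a + 1 : ℕ) : ℤ), ((3 * b + 3 : ℕ) : ℤ)) with hσV
  have hUV : σU + (d1, d2) = σV := by
    simp only [hσU, hσV, Prod.mk_add_mk, Prod.mk.injEq]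
    constructor <;> push_cast <;> omega
  have hGU : σG + (d1, d2) = σU := by
    simp only [hσG, hσU, Prod.mk_add_mk, Prod.mk.injEq]
    constructor <;> push_cast <;> omega
  set p : Fin 3 → Rk k := ![p0, p1, p2] with hp
  have hph : ∀ i, (p i).IsWeightedHomogeneous bidegWt (d1, d2) := by
    intro i; fin_cases i <;> simpa [hp]
  set K : Fin 3 → Fin 3 → Rk k := ![![p1, -p0, 0], ![p2, 0, -p0], ![0, p2, -p1]] with hKdef
  have hKh : ∀ i j, K i j ∈ WHk k (d1, d2) := by
    intro i j
    fin_cases i <;> fin_cases j <;>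
      simp only [hKdef, Matrix.cons_val', Matrix.cons_val_zero, Matrix.cons_val_one,
        Matrix.head_cons, Matrix.head_fin_const, Matrix.cons_val_fin_one, Matrix.empty_val'] <;>
      first
        | exact Submodule.zero_mem _
        | exact h0 | exact h1 | exact h2
        | exact Submodule.neg_mem _ h0
        | exact Submodule.neg_mem _ h1
        | exact Submodule.neg_mem _ h2
  -- the syzygy map on the bigraded piece
  set Φ : (Fin 3 → WHk k σU) →ₗ[k] WHk k σV :=
    { toFun := fun A => ⟨∑ i, ((A i : Rk k) * p i),
        Submodule.sum_mem _ (fun i _ => by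
          have hmul := ((A i).2 : (A i : Rk k).IsWeightedHomogeneous bidegWt σU).mul (hph i)
          rw [hUV] at hmul
          exact hmul)⟩
      map_add' := fun A B => Subtype.ext (by
        show ∑ i, (((A + B) i : Rk k)) * p i
            = (∑ i, (A i : Rk k) * p i) + ∑ i, (B i : Rk k) * p i
        rw [← Finset.sum_add_distrib]
        exact Finset.sum_congr rfl fun i _ => by simp [add_mul])
      map_smul' := fun r A => Subtype.ext (by
        show ∑ i, (((r • A) i : Rk k)) * p i = r • ∑ i, (A i : Rk k) * p i
        rw [Finset.smul_sum]
        exact Finset.sum_congr rfl fun i _ => by simp [smul_mul_assoc]) } with hΦ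
  set Ψ : (Fin 3 → WHk k σG) →ₗ[k] (Fin 3 → WHk k σU) :=
    { toFun := fun c j => ⟨∑ i, ((c i : Rk k) * K i j),
        Submodule.sum_mem _ (fun i _ => by
          have hmul := ((c i).2 : (c i : Rk k).IsWeightedHomogeneous bidegWt σG).mul (hKh i j)
          rw [hGU] at hmul
          exact hmul)⟩
      map_add' := fun A B => funext fun j => Subtype.ext (by
        show ∑ i, (((A + B) i : Rk k)) * K i j
            = (∑ i, (A i : Rk k) * K i j) + ∑ i, (B i : Rk k) * K i j
        rw [← Finset.sum_add_distrib]
        exact Finset.sum_congr rfl fun i _ => by simp [add_mul])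
      map_smul' := fun r A => funext fun j => Subtype.ext (by
        show ∑ i, (((r • A) i : Rk k)) * K i j = r • ∑ i, (A i : Rk k) * K i j
        rw [Finset.smul_sum]
        exact Finset.sum_congr rfl fun i _ => by simp [smul_mul_assoc]) } with hΨ
  -- dimension count
  have hUlb : (2 * a + 1) * (2 * b + 3) ≤ Module.finrank k (WHk k σU) := by
    have hlb := le_finrank_WHk (k := k) (2 * a) (2 * b + 2)
    have e : 2 * b + 3 = 2 * b + 2 + 1 := by ring
    rw [e]; exact hlb
  have hVub : Module.finrank k (WHk k σV) ≤ (3 * a + 2) * (3 * b + 4) := by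
    refine (finrank_WHk_le (k := k) σV).trans_eq ?_
    have e1 : (σV.1 + 1).toNat = 3 * a + 2 := by
      rw [hσV]; show (((3 * a + 1 : ℕ) : ℤ) + 1).toNat = 3 * a + 2; omega
    have e2 : (σV.2 + 1).toNat = 3 * b + 4 := by
      rw [hσV]; show (((3 * b + 3 : ℕ) : ℤ) + 1).toNat = 3 * b + 4; omega
    rw [e1, e2]
  have hGub : Module.finrank k (WHk k σG) ≤ a * (b + 2) := by
    refine (finrank_WHk_le (k := k) σG).trans_eq ?_
    have e1 : (σG.1 + 1).toNat = a := by
      rw [hσG]; show ((a : ℤ) - 1 + 1).toNat = a; omega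
    have e2 : (σG.2 + 1).toNat = b + 2 := by
      rw [hσG]; show (((b + 1 : ℕ) : ℤ) + 1).toNat = b + 2; omega
    rw [e1, e2]
  have hdomU : Module.finrank k (Fin 3 → WHk k σU) = 3 * Module.finrank k (WHk k σU) := by
    rw [Module.finrank_pi_fintype]
    rw [Finset.sum_const, Finset.card_univ, Fintype.card_fin, smul_eq_mul]
  have hdomG : Module.finrank k (Fin 3 → WHk k σG) = 3 * Module.finrank k (WHk k σG) := by
    rw [Module.finrank_pi_fintype]
    rw [Finset.sum_const, Finset.card_univ, Fintype.card_fin, smul_eq_mul]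
  have hkey : ¬ (LinearMap.ker Φ ≤ LinearMap.range Ψ) := by
    intro hle
    have hf1 : Module.finrank k (LinearMap.ker Φ) ≤ Module.finrank k (LinearMap.range Ψ) :=
      Submodule.finrank_mono hle
    have hf2 : Module.finrank k (LinearMap.range Ψ) ≤ Module.finrank k (Fin 3 → WHk k σG) :=
      Ψ.finrank_range_le
    have hf3 := Φ.finrank_range_add_finrank_ker
    have hf4 : Module.finrank k (LinearMap.range Φ) ≤ Module.finrank k (WHk k σV) :=
      (LinearMap.range Φ).finrank_le
    have harith : 3 * ((2 * a + 1) * (2 * b + 3))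
        = (3 * a + 2) * (3 * b + 4) + 3 * (a * (b + 2)) + 1 := by ring
    omega
  obtain ⟨A', hkerA, hnotA⟩ := SetLike.not_le_iff_exists.mp hkey
  refine ⟨fun i => (A' i : Rk k), ?_, ?_⟩
  · have hz : (Φ A' : Rk k) = 0 := by rw [LinearMap.mem_ker.mp hkerA]; rfl
    have hsum : ∑ i, ((A' i : Rk k) * p i) = 0 := hz
    rw [Fin.sum_univ_three] at hsum
    simpa [hp] using hsum
  · intro hmem
    rw [KoszulSub] at hmem
    have hset : ({![p1, -p0, 0], ![p2, 0, -p0], ![0, p2, -p1]} : Set (Fin 3 → Rk k))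
        = insert (K 0) (insert (K 1) {K 2}) := by
      simp [hKdef]
    rw [hset] at hmem
    obtain ⟨c0, z, hz, hAeq⟩ := Submodule.mem_span_insert.mp hmem
    obtain ⟨c1, z2, hz2, hzeq⟩ := Submodule.mem_span_insert.mp hz
    obtain ⟨c2, hc2⟩ := Submodule.mem_span_singleton.mp hz2
    set c : Fin 3 → Rk k := ![c0, c1, c2] with hc
    have hAj : ∀ j, (A' j : Rk k) = ∑ i, c i * K i j := by
      intro j
      have hthis := congrFun hAeq j
      rw [hzeq, ← hc2] at hthis
      simp only [Pi.add_apply, Pi.smul_apply, smul_eq_mul] at hthis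
      rw [hthis, Fin.sum_univ_three]
      show c0 * K 0 j + (c1 * K 1 j + c2 * K 2 j)
          = c 0 * K 0 j + c 1 * K 1 j + c 2 * K 2 j
      have hc0 : c 0 = c0 := rfl
      have hc1 : c 1 = c1 := rfl
      have hc2' : c 2 = c2 := rfl
      rw [hc0, hc1, hc2']
      ring
    -- project the coefficients to the bigraded piece
    set π : Rk k →ₗ[k] Rk k := weightedHomogeneousComponent bidegWt σG with hπ
    have hAj' : ∀ j, (A' j : Rk k) = ∑ i, (π (c i)) * K i j := by
      intro j
      have hAw : (A' j : Rk k).IsWeightedHomogeneous bidegWt σU := (A' j).2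
      calc (A' j : Rk k) = weightedHomogeneousComponent bidegWt σU (A' j : Rk k) :=
              hAw.weightedHomogeneousComponent_same.symm
        _ = weightedHomogeneousComponent bidegWt σU (∑ i, c i * K i j) := by rw [← hAj j]
        _ = ∑ i, weightedHomogeneousComponent bidegWt σU (c i * K i j) := map_sum _ _ _
        _ = ∑ i, (π (c i)) * K i j := by
              refine Finset.sum_congr rfl fun i _ => ?_
              rw [← hGU, wcomp_mul _ _ _ (hKh i j)]
    set g : Fin 3 → WHk k σG := fun i => ⟨π (c i), weightedHomogeneousComponent_mem _ _ _⟩ with hg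
    have hΨg : Ψ g = A' := by
      funext j
      refine Subtype.ext ?_
      show (∑ i, ((g i : Rk k) * K i j)) = (A' j : Rk k)
      simp only [hg]
      exact (hAj' j).symm
    exact hnotA ⟨g, hΨg⟩

theorem not_regular_of_nonKoszul {k : Type*} [Field k] (p0 p1 p2 : Rk k)
    (A : Fin 3 → Rk k) (hsyz : A 0 * p0 + A 1 * p1 + A 2 * p2 = 0)
    (hnk : A ∉ KoszulSub p0 p1 p2) :
    ¬ RingTheory.Sequence.IsRegular (Rk k) [p0, p1, p2] := by
  intro hreg
  have hw := hreg.toIsWeaklyRegular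
  have r0 := hw.regular_mod_prev 0 (by norm_num)
  have r1 := hw.regular_mod_prev 1 (by norm_num)
  have r2 := hw.regular_mod_prev 2 (by norm_num)
  have ht1 : List.take 1 [p0, p1, p2] = [p0] := rfl
  have ht2 : List.take 2 [p0, p1, p2] = [p0, p1] := rfl
  rw [ht1] at r1
  rw [ht2] at r2
  simp only [List.take_zero, List.getElem_cons_zero, List.getElem_cons_succ] at r0 r1 r2
  have e0 : (Ideal.ofList ([] : List (Rk k)) • (⊤ : Submodule (Rk k) (Rk k))) = ⊥ := by
    rw [Ideal.ofList_nil, Submodule.bot_smul]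
  replace r0 : IsSMulRegular (Rk k ⧸ (⊥ : Submodule (Rk k) (Rk k))) p0 :=
    e0 ▸ (hw.regular_mod_prev 0 (by norm_num) :
      IsSMulRegular (Rk k ⧸ (Ideal.ofList ([] : List (Rk k)) • (⊤ : Submodule (Rk k) (Rk k)))) p0)
  have e1 : Ideal.ofList ([p0] : List (Rk k)) = Ideal.span {p0} := Ideal.ofList_singleton p0
  have e2 : Ideal.ofList ([p0, p1] : List (Rk k)) = Ideal.span {p0, p1} := by
    rw [Ideal.ofList_cons, Ideal.ofList_singleton, ← Ideal.span_union, Set.singleton_union]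
  rw [e1, ideal_smul_top] at r1
  rw [e2, ideal_smul_top] at r2
  -- Step 1: A 2 ∈ (p0, p1)
  have h2m : A 2 * p2 ∈ (Ideal.span {p0, p1} : Ideal (Rk k)) := by
    have hrw : A 2 * p2 = (-(A 0)) * p0 + (-(A 1)) * p1 := by linear_combination hsyz
    rw [hrw]
    exact Submodule.add_mem _
      (Ideal.mul_mem_left _ _ (Ideal.subset_span (by simp)))
      (Ideal.mul_mem_left _ _ (Ideal.subset_span (by simp)))
  have hA2 : A 2 ∈ (Ideal.span {p0, p1} : Ideal (Rk k)) := quot_reg_mem r2 h2m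
  obtain ⟨u, v, huv⟩ := Ideal.mem_span_pair.mp hA2
  -- Step 2: A 1 + v * p2 ∈ (p0)
  have hB : (A 0 + u * p2) * p0 + (A 1 + v * p2) * p1 = 0 := by
    linear_combination hsyz + p2 * huv
  have hB1m : (A 1 + v * p2) * p1 ∈ (Ideal.span {p0} : Ideal (Rk k)) := by
    have hrw : (A 1 + v * p2) * p1 = (-(A 0 + u * p2)) * p0 := by linear_combination hB
    rw [hrw]
    exact Ideal.mul_mem_left _ _ (Ideal.subset_span (by simp))
  have hB1 : A 1 + v * p2 ∈ (Ideal.span {p0} : Ideal (Rk k)) := quot_reg_mem r1 hB1m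
  obtain ⟨t, ht⟩ := Ideal.mem_span_singleton'.mp hB1
  -- Step 3: A 0 + u * p2 = - t * p1
  have hz : (A 0 + u * p2 + t * p1) * p0 = 0 := by linear_combination hB + p1 * ht
  have hB0 : A 0 + u * p2 + t * p1 ∈ (⊥ : Submodule (Rk k) (Rk k)) :=
    quot_reg_mem r0 ((Submodule.mem_bot _).mpr hz)
  rw [Submodule.mem_bot] at hB0
  -- Conclusion: A is a Koszul combination
  have h0' : A 0 = -t * p1 + -u * p2 + -v * 0 := by linear_combination hB0
  have h1' : A 1 = -t * (-p0) + -u * 0 + -v * p2 := by linear_combination -ht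
  have h2' : A 2 = -t * 0 + -u * (-p0) + -v * (-p1) := by linear_combination -huv
  have hA : A = (-t) • ![p1, -p0, 0] + (-u) • ![p2, 0, -p0] + (-v) • ![0, p2, -p1] := by
    funext j
    fin_cases j
    · simpa using h0'
    · simpa using h1'
    · simpa using h2'
  apply hnk
  rw [KoszulSub, hA]
  refine Submodule.add_mem _ (Submodule.add_mem _ ?_ ?_) ?_ <;>
    exact Submodule.smul_mem _ _ (Submodule.subset_span (by simp))




end Stmt1Aux

/-- If `p0, p1, p2 ∈ R_{d1,d2}` with `d1, d2 > 0` have no common zeros on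
`ℙ¹ × ℙ¹`, then the Koszul complex is not exact: there is a syzygy on `p0, p1, p2` not in
the Koszul submodule; in particular `p0, p1, p2` is not a regular sequence in `R`. -/
theorem statement1 {k : Type*} [Field k] [IsAlgClosed k] (d1 d2 : ℤ)
    (hd1 : 0 < d1) (hd2 : 0 < d2) (p0 p1 p2 : Rk k)
    (h0 : Bihom p0 d1 d2) (h1 : Bihom p1 d1 d2) (h2 : Bihom p2 d1 d2)
    (hncz : NoCommonZeros p0 p1 p2) :
    (∃ A : Fin 3 → Rk k, A 0 * p0 + A 1 * p1 + A 2 * p2 = 0 ∧ A ∉ KoszulSub p0 p1 p2) ∧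
      ¬ RingTheory.Sequence.IsRegular (Rk k) [p0, p1, p2] := by
  have H0 : p0.IsWeightedHomogeneous bidegWt (d1, d2) := h0
  have H1 : p1.IsWeightedHomogeneous bidegWt (d1, d2) := h1
  have H2 : p2.IsWeightedHomogeneous bidegWt (d1, d2) := h2
  obtain ⟨A, hA1, hA2⟩ := Stmt1Aux.exists_nonKoszul d1 d2 hd1 hd2 p0 p1 p2 H0 H1 H2
  exact ⟨⟨A, hA1, hA2⟩, Stmt1Aux.not_regular_of_nonKoszul p0 p1 p2 A hA1 hA2⟩
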